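/- Pohozaev-type equipartition: if Q ∈ C²(ℝ^N) ∩ Ḣ¹ solves ΔQ + |Q|^{4/(N-2)}Q = 0 with the decay bounds |∂^α Q(x)| ≤ C_α |x|^{2-N-|α|} for |x| ≥ 1 and |α| ≤ 2, then for each 1 ≤ j ≤ N, ∫|∂_{x_j}Q|² dx = (1/N)∫|∇Q|² dx. -/

import Mathlib

open MeasureTheory Real Module Filter Topology

/-- Derivative of `t ↦ |t| ^ (r+2)` (rpow), for `r > 0`. -/
lemma poho_abs_rpow_hasDerivAt {r : ℝ} (hr : 0 < r) (s : ℝ) :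
    HasDerivAt (fun t : ℝ => |t| ^ (r + 2)) ((r + 2) * (|s| ^ r * s)) s := by
  rcases lt_trichotomy s 0 with hs | rfl | hs
  · have h1 : HasDerivAt (fun t : ℝ => (-t) ^ (r + 2)) ((r + 2) * (-s) ^ (r + 2 - 1) * (-1)) s := by
      have := (Real.hasDerivAt_rpow_const (x := -s) (p := r + 2) (Or.inl (by linarith))).comp s
        (hasDerivAt_neg s)
      simpa [mul_comm, Function.comp_def] using this
    have h2 : (r + 2) * (-s) ^ (r + 2 - 1) * (-1) = (r + 2) * (|s| ^ r * s) := by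
      rw [abs_of_neg hs]
      have h4 : (-s) ^ (r + 2 - 1) = (-s) ^ r * (-s) := by
        rw [show r + 2 - 1 = r + 1 by ring, Real.rpow_add_one (by linarith)]
      rw [h4]; ring
    have h3 : (fun t : ℝ => (-t) ^ (r + 2)) =ᶠ[nhds s] fun t => |t| ^ (r + 2) := by
      filter_upwards [IsOpen.mem_nhds isOpen_Iio hs] with t ht
      rw [abs_of_neg ht]
    exact h2 ▸ (h1.congr_of_eventuallyEq h3.symm)
  · -- s = 0
    have key : HasDerivAt (fun t : ℝ => |t| ^ (r + 2)) 0 0 := by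
      rw [hasDerivAt_iff_tendsto_slope]
      have hb : ∀ t : ℝ, ‖slope (fun t : ℝ => |t| ^ (r + 2)) 0 t‖ ≤ |t| ^ (r + 1) := by
        intro t
        rcases eq_or_ne t 0 with rfl | ht
        · simp [slope_def_field, Real.zero_rpow (by positivity : r + 1 ≠ 0),
            Real.zero_rpow (by positivity : r + 2 ≠ 0)]
        · rw [slope_def_field]
          simp only [abs_zero, Real.zero_rpow (by positivity : r + 2 ≠ 0), sub_zero]
          rw [norm_div, Real.norm_eq_abs, Real.norm_eq_abs,
            abs_of_nonneg (Real.rpow_nonneg (abs_nonneg t) _)]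
          rw [div_le_iff₀ (abs_pos.2 ht)]
          rw [← Real.rpow_add_one (abs_ne_zero.2 ht)]
          exact le_of_eq (by ring_nf)
      have hlim : Filter.Tendsto (fun t : ℝ => |t| ^ (r + 1)) (nhds 0) (nhds 0) := by
        have h1 : Filter.Tendsto (fun t : ℝ => |t|) (nhds 0) (nhds 0) := by
          simpa using continuous_abs.tendsto (0 : ℝ)
        have h2 : Filter.Tendsto (fun u : ℝ => u ^ (r + 1)) (nhds 0) (nhds 0) := by
          have := (Real.continuousAt_rpow_const 0 (r + 1) (Or.inr (by positivity)))
          simpa [ContinuousAt, Real.zero_rpow (by positivity : r + 1 ≠ 0)] using this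
        exact h2.comp h1
      exact squeeze_zero_norm hb (hlim.mono_left nhdsWithin_le_nhds)
    simpa using key
  · have h1 : HasDerivAt (fun t : ℝ => t ^ (r + 2)) ((r + 2) * s ^ (r + 2 - 1)) s :=
      Real.hasDerivAt_rpow_const (Or.inl (by linarith))
    have h2 : (r + 2) * s ^ (r + 2 - 1) = (r + 2) * (|s| ^ r * s) := by
      rw [abs_of_pos hs, show r + 2 - 1 = r + 1 by ring, Real.rpow_add_one (by linarith)]
    have h3 : (fun t : ℝ => t ^ (r + 2)) =ᶠ[nhds s] fun t => |t| ^ (r + 2) := by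
      filter_upwards [IsOpen.mem_nhds isOpen_Ioi hs] with t ht
      rw [abs_of_pos ht]
    exact h2 ▸ (h1.congr_of_eventuallyEq h3.symm)

lemma poho_calc {N : ℕ} {r : ℝ} (hr : 0 < r)
    (Q : (Fin N → ℝ) → ℝ) (A : (Fin N → ℝ) → (Fin N → ℝ) →L[ℝ] ℝ)
    (DU : Fin N → (Fin N → ℝ) → (Fin N → ℝ) →L[ℝ] ℝ)
    (hA : ∀ x, HasFDerivAt Q (A x) x)
    (hu : ∀ (i : Fin N) (x), HasFDerivAt (fun y => A y (Pi.single i 1)) (DU i x) x)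
    (j i : Fin N) (x : Fin N → ℝ) :
    ∃ L : (Fin N → ℝ) →L[ℝ] ℝ,
      HasFDerivAt (fun y : Fin N → ℝ => y j * A y (Pi.single j 1) * A y (Pi.single i 1)
          - (if i = j then y j * ((∑ k, (A y (Pi.single k 1)) ^ 2) / 2
              - |Q y| ^ (r + 2) / (r + 2)) else 0)) L x ∧
      L (Pi.single i 1) =
        x j * A x (Pi.single j 1) * DU i x (Pi.single i 1)
        + A x (Pi.single i 1) * (x j * DU j x (Pi.single i 1))
        + (if i = j then
            A x (Pi.single j 1) * A x (Pi.single j 1)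
            - (((∑ k, (A x (Pi.single k 1)) ^ 2) / 2 - |Q x| ^ (r + 2) / (r + 2))
               + x j * ((∑ k, A x (Pi.single k 1) * DU k x (Pi.single j 1))
                        - |Q x| ^ r * Q x * A x (Pi.single j 1)))
          else 0) := by
  have hr2 : (r + 2) ≠ 0 := by linarith
  have hxj0 := (ContinuousLinearMap.proj (R := ℝ) (φ := fun _ : Fin N => ℝ) j).hasFDerivAt (x := x)
  have hxj : HasFDerivAt (fun y : Fin N → ℝ => y j)
      (ContinuousLinearMap.proj j : (Fin N → ℝ) →L[ℝ] ℝ) x := hxj0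
  have hP := (hxj.mul (hu j x)).mul (hu i x)
  by_cases hij : i = j
  · subst hij
    have hSq : ∀ k : Fin N, HasFDerivAt (fun y => (A y (Pi.single k 1)) ^ 2)
        (A x (Pi.single k 1) • DU k x + A x (Pi.single k 1) • DU k x) x := fun k =>
      ((hu k x).mul (hu k x)).congr_of_eventuallyEq
        (Filter.Eventually.of_forall fun y => by simp only [Pi.mul_apply]; ring)
    have hS := HasFDerivAt.fun_sum (u := Finset.univ) (fun k _ => hSq k)
    have hF : HasFDerivAt (fun y => |Q y| ^ (r + 2)) (((r + 2) * (|Q x| ^ r * Q x)) • A x) x :=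
      (poho_abs_rpow_hasDerivAt hr (Q x)).comp_hasFDerivAt x (hA x)
    have hG : HasFDerivAt (fun y : Fin N → ℝ =>
        (∑ k, (A y (Pi.single k 1)) ^ 2) / 2 - |Q y| ^ (r + 2) / (r + 2)) _ x :=
      ((hS.mul_const ((2:ℝ)⁻¹)).sub (hF.mul_const (((r:ℝ) + 2)⁻¹))).congr_of_eventuallyEq
        (Filter.Eventually.of_forall fun y => by simp only [Pi.sub_apply]; ring)
    have hV := hP.sub (hxj.mul hG)
    refine ⟨_, by simpa [Pi.mul_def, Pi.sub_def] using hV, ?_⟩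
    simp only [ContinuousLinearMap.add_apply, ContinuousLinearMap.sub_apply,
      ContinuousLinearMap.smul_apply, ContinuousLinearMap.coe_smul', Pi.smul_apply,
      ContinuousLinearMap.proj_apply, ContinuousLinearMap.sum_apply,
      Pi.single_eq_same, smul_eq_mul, if_pos rfl, ↓reduceIte]
    rw [Finset.mul_sum]
    field_simp
    ring
  · refine ⟨_, by simpa [hij] using hP.sub_const 0, ?_⟩
    simp only [ContinuousLinearMap.add_apply, ContinuousLinearMap.smul_apply,
      ContinuousLinearMap.coe_smul', Pi.smul_apply, ContinuousLinearMap.proj_apply,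
      smul_eq_mul, if_neg hij, Pi.single_apply, if_neg (Ne.symm hij)]
    ring

lemma poho_sum_eval {N : ℕ} {r : ℝ}
    (Q : (Fin N → ℝ) → ℝ) (A : (Fin N → ℝ) → (Fin N → ℝ) →L[ℝ] ℝ)
    (DU : Fin N → (Fin N → ℝ) → (Fin N → ℝ) →L[ℝ] ℝ)
    (hsym : ∀ (x : Fin N → ℝ) (i k : Fin N),
      DU i x (Pi.single k 1) = DU k x (Pi.single i 1))
    (heq : ∀ x, (∑ i, DU i x (Pi.single i 1)) + |Q x| ^ r * Q x = 0)
    (j : Fin N) (x : Fin N → ℝ) :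
    ∑ i, (x j * A x (Pi.single j 1) * DU i x (Pi.single i 1)
        + A x (Pi.single i 1) * (x j * DU j x (Pi.single i 1))
        + (if i = j then
            A x (Pi.single j 1) * A x (Pi.single j 1)
            - (((∑ k, (A x (Pi.single k 1)) ^ 2) / 2 - |Q x| ^ (r + 2) / (r + 2))
               + x j * ((∑ k, A x (Pi.single k 1) * DU k x (Pi.single j 1))
                        - |Q x| ^ r * Q x * A x (Pi.single j 1)))
          else 0))
      = (A x (Pi.single j 1)) ^ 2 + |Q x| ^ (r + 2) / (r + 2)
        - (∑ k, (A x (Pi.single k 1)) ^ 2) / 2 := by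
  have h2 : (∑ i, DU i x (Pi.single i 1)) = -(|Q x| ^ r * Q x) := by linarith [heq x]
  calc ∑ i, (x j * A x (Pi.single j 1) * DU i x (Pi.single i 1)
        + A x (Pi.single i 1) * (x j * DU j x (Pi.single i 1))
        + (if i = j then
            A x (Pi.single j 1) * A x (Pi.single j 1)
            - (((∑ k, (A x (Pi.single k 1)) ^ 2) / 2 - |Q x| ^ (r + 2) / (r + 2))
               + x j * ((∑ k, A x (Pi.single k 1) * DU k x (Pi.single j 1))
                        - |Q x| ^ r * Q x * A x (Pi.single j 1)))
          else 0))
      = (∑ i, (x j * A x (Pi.single j 1)) * DU i x (Pi.single i 1))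
        + ((∑ i, x j * (A x (Pi.single i 1) * DU i x (Pi.single j 1)))
        + (∑ i, (if i = j then
            A x (Pi.single j 1) * A x (Pi.single j 1)
            - (((∑ k, (A x (Pi.single k 1)) ^ 2) / 2 - |Q x| ^ (r + 2) / (r + 2))
               + x j * ((∑ k, A x (Pi.single k 1) * DU k x (Pi.single j 1))
                        - |Q x| ^ r * Q x * A x (Pi.single j 1)))
          else 0))) := by
        rw [← Finset.sum_add_distrib, ← Finset.sum_add_distrib]
        refine Finset.sum_congr rfl fun i _ => ?_
        rw [hsym x j i]; ring
    _ = (A x (Pi.single j 1)) ^ 2 + |Q x| ^ (r + 2) / (r + 2)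
        - (∑ k, (A x (Pi.single k 1)) ^ 2) / 2 := by
        rw [← Finset.mul_sum, ← Finset.mul_sum, h2,
          Finset.sum_ite_eq' Finset.univ j, if_pos (Finset.mem_univ j)]
        ring

lemma poho_V_bound {N : ℕ} (hN : 3 ≤ N) {r : ℝ} (hrN : r = 4 / ((N : ℝ) - 2))
    (Q : (Fin N → ℝ) → ℝ) (A : (Fin N → ℝ) → (Fin N → ℝ) →L[ℝ] ℝ)
    (C : ℝ) (hC : 1 ≤ C)
    (hd1 : ∀ z : Fin N → ℝ, 1 ≤ ‖z‖ → |Q z| ≤ C * ‖z‖ ^ ((2 : ℝ) - N))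
    (hd2 : ∀ z : Fin N → ℝ, 1 ≤ ‖z‖ → ∀ i : Fin N,
      |A z (Pi.single i 1)| ≤ C * ‖z‖ ^ ((1 : ℝ) - N))
    (j i : Fin N) (R : ℝ) (hR : 1 ≤ R) (z : Fin N → ℝ) (hz : R ≤ ‖z‖) :
    |z j * A z (Pi.single j 1) * A z (Pi.single i 1)
      - (if i = j then z j * ((∑ k, (A z (Pi.single k 1)) ^ 2) / 2
          - |Q z| ^ (r + 2) / (r + 2)) else 0)|
      ≤ ((N : ℝ) * C ^ 2 + C ^ (r + 2)) * 2 * R ^ (3 - 2 * (N : ℝ)) := by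
  have hN3 : (3 : ℝ) ≤ (N : ℝ) := by exact_mod_cast hN
  have h1 : (1 : ℝ) ≤ ‖z‖ := le_trans hR hz
  have hz0 : (0 : ℝ) < ‖z‖ := by linarith
  have hr : 0 < r := by
    rw [hrN]
    have : (0:ℝ) < (N : ℝ) - 2 := by linarith
    positivity
  set a := ‖z‖ with ha
  have habs : |z j| ≤ a := by
    simpa [Real.norm_eq_abs] using norm_le_pi_norm z j
  have hu : ∀ k : Fin N, |A z (Pi.single k 1)| ≤ C * a ^ ((1:ℝ) - N) := hd2 z h1
  have ht0 : (0:ℝ) ≤ a ^ ((1:ℝ) - N) := Real.rpow_nonneg hz0.le _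
  have hB0 : (0:ℝ) ≤ C * a ^ ((1:ℝ) - N) := by positivity
  -- power identities
  have hA2 : a ^ ((1:ℝ) - N) * a ^ ((1:ℝ) - N) = a ^ ((2:ℝ) - 2 * N) := by
    rw [← Real.rpow_add hz0]; ring_nf
  have hA1 : a * a ^ ((2:ℝ) - 2 * N) = a ^ (3 - 2 * (N : ℝ)) := by
    nth_rewrite 1 [← Real.rpow_one a]
    rw [← Real.rpow_add hz0]; ring_nf
  -- bound on the sum S
  have hS : |∑ k, (A z (Pi.single k 1)) ^ 2| ≤ (N : ℝ) * C ^ 2 * a ^ ((2:ℝ) - 2 * N) := by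
    calc |∑ k, (A z (Pi.single k 1)) ^ 2| ≤ ∑ k : Fin N, |(A z (Pi.single k 1)) ^ 2| :=
          Finset.abs_sum_le_sum_abs _ _
      _ ≤ ∑ k : Fin N, C ^ 2 * a ^ ((2:ℝ) - 2 * N) := by
          refine Finset.sum_le_sum fun k _ => ?_
          rw [abs_pow]
          calc |A z (Pi.single k 1)| ^ 2 ≤ (C * a ^ ((1:ℝ) - N)) ^ 2 := by
                exact pow_le_pow_left₀ (abs_nonneg _) (hu k) 2
            _ = C ^ 2 * a ^ ((2:ℝ) - 2 * N) := by
                rw [mul_pow, pow_two (a ^ ((1:ℝ) - N)), hA2]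
      _ = (N : ℝ) * C ^ 2 * a ^ ((2:ℝ) - 2 * N) := by
          rw [Finset.sum_const, Finset.card_univ, Fintype.card_fin, nsmul_eq_mul]; ring
  -- bound on the F term
  have hF : |Q z| ^ (r + 2) / (r + 2) ≤ C ^ (r + 2) * a ^ ((2:ℝ) - 2 * N) := by
    have hF1 : |Q z| ^ (r + 2) ≤ (C * a ^ ((2:ℝ) - N)) ^ (r + 2) :=
      Real.rpow_le_rpow (abs_nonneg _) (hd1 z h1) (by linarith)
    have hF2 : (C * a ^ ((2:ℝ) - N)) ^ (r + 2) = C ^ (r + 2) * a ^ (((2:ℝ) - N) * (r + 2)) := by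
      rw [Real.mul_rpow (by linarith) (Real.rpow_nonneg hz0.le _), ← Real.rpow_mul hz0.le]
    have hexp : ((2:ℝ) - N) * (r + 2) = -(2 * N) := by
      rw [hrN]
      have hne : (N : ℝ) - 2 ≠ 0 := by linarith
      field_simp
      ring
    have hF3 : a ^ (((2:ℝ) - N) * (r + 2)) ≤ a ^ ((2:ℝ) - 2 * N) := by
      rw [hexp]
      exact Real.rpow_le_rpow_of_exponent_le h1 (by linarith)
    have hF4 : |Q z| ^ (r + 2) / (r + 2) ≤ |Q z| ^ (r + 2) :=
      div_le_self (Real.rpow_nonneg (abs_nonneg _) _) (by linarith)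
    calc |Q z| ^ (r + 2) / (r + 2) ≤ |Q z| ^ (r + 2) := hF4
      _ ≤ C ^ (r + 2) * a ^ (((2:ℝ) - N) * (r + 2)) := by rw [← hF2]; exact hF1
      _ ≤ C ^ (r + 2) * a ^ ((2:ℝ) - 2 * N) := by
          have : (0:ℝ) ≤ C ^ (r + 2) := Real.rpow_nonneg (by linarith) _
          exact mul_le_mul_of_nonneg_left hF3 this
  -- main triangle inequality
  have htri : |z j * A z (Pi.single j 1) * A z (Pi.single i 1)
      - (if i = j then z j * ((∑ k, (A z (Pi.single k 1)) ^ 2) / 2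
          - |Q z| ^ (r + 2) / (r + 2)) else 0)|
      ≤ a * (C * a ^ ((1:ℝ) - N)) * (C * a ^ ((1:ℝ) - N))
        + a * ((N : ℝ) * C ^ 2 * a ^ ((2:ℝ) - 2 * N) / 2 + C ^ (r + 2) * a ^ ((2:ℝ) - 2 * N)) := by
    refine (abs_sub _ _).trans (add_le_add ?_ ?_)
    · rw [abs_mul, abs_mul]
      have h1' : |z j| * |A z (Pi.single j 1)| ≤ a * (C * a ^ ((1:ℝ) - N)) :=
        mul_le_mul habs (hu j) (abs_nonneg _) (by positivity)
      exact mul_le_mul h1' (hu i) (abs_nonneg _) (by positivity)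
    · rcases eq_or_ne i j with rfl | hij
      · rw [if_pos rfl, abs_mul]
        refine mul_le_mul habs ?_ (abs_nonneg _) (by positivity)
        refine (abs_sub _ _).trans (add_le_add ?_ ?_)
        · rw [abs_div, abs_two]
          linarith [hS]
        · rw [abs_of_nonneg (by positivity)]
          exact hF
      · rw [if_neg hij, abs_zero]
        positivity
  have he1 : a * (C * a ^ ((1:ℝ) - N)) * (C * a ^ ((1:ℝ) - N))
      = C ^ 2 * a ^ (3 - 2 * (N:ℝ)) := by
    rw [← hA1, ← hA2]; ring
  have he2 : a * ((N : ℝ) * C ^ 2 * a ^ ((2:ℝ) - 2 * N) / 2 + C ^ (r + 2) * a ^ ((2:ℝ) - 2 * N))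
      = ((N:ℝ) * C ^ 2 / 2 + C ^ (r + 2)) * a ^ (3 - 2 * (N:ℝ)) := by
    rw [← hA1]; ring
  have hmono : a ^ (3 - 2 * (N:ℝ)) ≤ R ^ (3 - 2 * (N:ℝ)) :=
    Real.rpow_le_rpow_of_nonpos (by linarith) hz (by linarith)
  have hcr : (0:ℝ) ≤ C ^ (r + 2) := Real.rpow_nonneg (by linarith) _
  have hcoef : C ^ 2 + ((N:ℝ) * C ^ 2 / 2 + C ^ (r + 2)) ≤ ((N:ℝ) * C ^ 2 + C ^ (r + 2)) * 2 := by
    nlinarith [sq_nonneg C]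
  calc _ ≤ _ := htri
    _ = (C ^ 2 + ((N:ℝ) * C ^ 2 / 2 + C ^ (r + 2))) * a ^ (3 - 2 * (N:ℝ)) := by
        rw [he1, he2]; ring
    _ ≤ ((N : ℝ) * C ^ 2 + C ^ (r + 2)) * 2 * R ^ (3 - 2 * (N : ℝ)) := by
        exact mul_le_mul hcoef hmono (Real.rpow_nonneg hz0.le _) (by nlinarith [sq_nonneg C])

lemma poho_F_integrable {N : ℕ} (hN : 3 ≤ N) {r : ℝ} (hrN : r = 4 / ((N : ℝ) - 2))
    (Q : (Fin N → ℝ) → ℝ) (hcont : Continuous Q) (C : ℝ) (hC : 1 ≤ C)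
    (hd1 : ∀ z : Fin N → ℝ, 1 ≤ ‖z‖ → |Q z| ≤ C * ‖z‖ ^ ((2 : ℝ) - N)) :
    Integrable (fun x : Fin N → ℝ => |Q x| ^ (r + 2) / (r + 2)) := by
  have hN3 : (3 : ℝ) ≤ (N : ℝ) := by exact_mod_cast hN
  have hr : 0 < r := by
    rw [hrN]
    have : (0:ℝ) < (N : ℝ) - 2 := by linarith
    positivity
  have hexp : ((2:ℝ) - N) * (r + 2) = -(2 * N) := by
    rw [hrN]
    have hne : (N : ℝ) - 2 ≠ 0 := by linarith
    field_simp
    ring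
  obtain ⟨M, hM⟩ := (isCompact_closedBall (0 : Fin N → ℝ) 1).exists_bound_of_continuousOn
    hcont.continuousOn
  set D : ℝ := C + max M 0 + 1 with hD
  have hD1 : (1:ℝ) ≤ D := by
    have := le_max_right M (0:ℝ); simp only [hD]; linarith
  have hDC : C ≤ D := by have := le_max_right M (0:ℝ); simp only [hD]; linarith
  have key : ∀ x : Fin N → ℝ,
      |Q x| ^ (r + 2) ≤ (D ^ (r + 2) * 2 ^ (2 * (N:ℝ))) * (1 + ‖x‖) ^ (-(2 * (N:ℝ))) := by
    intro x
    have hx0 : (0:ℝ) ≤ ‖x‖ := norm_nonneg x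
    have h1x : (0:ℝ) < 1 + ‖x‖ := by linarith
    rcases le_or_gt 1 ‖x‖ with hx1 | hx1
    · -- outer region
      have hxpos : (0:ℝ) < ‖x‖ := by linarith
      have hQ1 : |Q x| ≤ D * ‖x‖ ^ ((2:ℝ) - N) := by
        refine (hd1 x hx1).trans ?_
        exact mul_le_mul_of_nonneg_right hDC (Real.rpow_nonneg hx0 _)
      have h2 : |Q x| ^ (r + 2) ≤ D ^ (r + 2) * ‖x‖ ^ (-(2 * (N:ℝ))) := by
        calc |Q x| ^ (r + 2) ≤ (D * ‖x‖ ^ ((2:ℝ) - N)) ^ (r + 2) :=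
              Real.rpow_le_rpow (abs_nonneg _) hQ1 (by linarith)
          _ = D ^ (r + 2) * ‖x‖ ^ (((2:ℝ) - N) * (r + 2)) := by
              rw [Real.mul_rpow (by linarith) (Real.rpow_nonneg hx0 _),
                ← Real.rpow_mul hx0]
          _ = D ^ (r + 2) * ‖x‖ ^ (-(2 * (N:ℝ))) := by rw [hexp]
      have h3 : ‖x‖ ^ (-(2 * (N:ℝ))) ≤ 2 ^ (2 * (N:ℝ)) * (1 + ‖x‖) ^ (-(2 * (N:ℝ))) := by
        have h4 : (2 * ‖x‖) ^ (-(2 * (N:ℝ))) ≤ (1 + ‖x‖) ^ (-(2 * (N:ℝ))) :=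
          Real.rpow_le_rpow_of_nonpos h1x (by linarith) (by linarith)
        have h5 : (2 * ‖x‖) ^ (-(2 * (N:ℝ)))
            = 2 ^ (-(2 * (N:ℝ))) * ‖x‖ ^ (-(2 * (N:ℝ))) :=
          Real.mul_rpow (by norm_num) hx0
        have h6 : (0:ℝ) < 2 ^ (2 * (N:ℝ)) := Real.rpow_pos_of_pos (by norm_num) _
        rw [h5] at h4
        rw [Real.rpow_neg (by norm_num : (0:ℝ) ≤ 2)] at h4
        calc ‖x‖ ^ (-(2 * (N:ℝ)))
            = 2 ^ (2 * (N:ℝ)) * ((2 ^ (2 * (N:ℝ)))⁻¹ * ‖x‖ ^ (-(2 * (N:ℝ)))) := by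
              field_simp
          _ ≤ 2 ^ (2 * (N:ℝ)) * (1 + ‖x‖) ^ (-(2 * (N:ℝ))) :=
              mul_le_mul_of_nonneg_left h4 h6.le
      calc |Q x| ^ (r + 2) ≤ D ^ (r + 2) * ‖x‖ ^ (-(2 * (N:ℝ))) := h2
        _ ≤ D ^ (r + 2) * (2 ^ (2 * (N:ℝ)) * (1 + ‖x‖) ^ (-(2 * (N:ℝ)))) :=
            mul_le_mul_of_nonneg_left h3 (Real.rpow_nonneg (by linarith) _)
        _ = (D ^ (r + 2) * 2 ^ (2 * (N:ℝ))) * (1 + ‖x‖) ^ (-(2 * (N:ℝ))) := by ring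
    · -- inner region
      have hQM : |Q x| ≤ D := by
        have hmem : x ∈ Metric.closedBall (0 : Fin N → ℝ) 1 := by
          simpa [Metric.mem_closedBall] using hx1.le
        have := hM x hmem
        rw [Real.norm_eq_abs] at this
        have h7 := le_max_left M (0:ℝ)
        simp only [hD]; linarith
      have h2 : |Q x| ^ (r + 2) ≤ D ^ (r + 2) :=
        Real.rpow_le_rpow (abs_nonneg _) hQM (by linarith)
      have h3 : 2 ^ (-(2 * (N:ℝ))) ≤ (1 + ‖x‖) ^ (-(2 * (N:ℝ))) :=
        Real.rpow_le_rpow_of_nonpos h1x (by linarith) (by linarith)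
      have h6 : (0:ℝ) < 2 ^ (2 * (N:ℝ)) := Real.rpow_pos_of_pos (by norm_num) _
      have h8 : (0:ℝ) ≤ D ^ (r + 2) := Real.rpow_nonneg (by linarith) _
      calc |Q x| ^ (r + 2) ≤ D ^ (r + 2) := h2
        _ = (D ^ (r + 2) * 2 ^ (2 * (N:ℝ))) * 2 ^ (-(2 * (N:ℝ))) := by
            rw [Real.rpow_neg (by norm_num : (0:ℝ) ≤ 2)]
            field_simp
        _ ≤ (D ^ (r + 2) * 2 ^ (2 * (N:ℝ))) * (1 + ‖x‖) ^ (-(2 * (N:ℝ))) := by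
            exact mul_le_mul_of_nonneg_left h3 (by positivity)
  have hbase : Integrable (fun x : Fin N → ℝ => (1 + ‖x‖) ^ (-(2 * (N:ℝ)))) := by
    apply integrable_one_add_norm
    rw [Module.finrank_fin_fun]
    push_cast
    linarith
  have hint : Integrable (fun x : Fin N → ℝ => |Q x| ^ (r + 2)) := by
    refine Integrable.mono' (hbase.const_mul (D ^ (r + 2) * 2 ^ (2 * (N:ℝ)))) ?_ ?_
    · exact (hcont.abs.rpow_const (fun x => Or.inr (by linarith))).aestronglyMeasurable
    · refine Filter.Eventually.of_forall fun x => ?_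
      rw [Real.norm_eq_abs, abs_of_nonneg (Real.rpow_nonneg (abs_nonneg _) _)]
      exact key x
  exact hint.div_const _

theorem stmt_17 (N : ℕ) (hN : 3 ≤ N) (hN5 : N ≤ 5)
    (Q : (Fin N → ℝ) → ℝ) (hQ : ContDiff ℝ 2 Q)
    (heq : ∀ x : Fin N → ℝ,
      (∑ j : Fin N, fderiv ℝ (fun y => fderiv ℝ Q y (Pi.single j 1)) x (Pi.single j 1))
        + |Q x| ^ ((4 : ℝ) / ((N : ℝ) - 2)) * Q x = 0)
    (hgrad : Integrable (fun x : Fin N → ℝ => ∑ j : Fin N, (fderiv ℝ Q x (Pi.single j 1)) ^ 2))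
    (hdecay : ∃ C : ℝ, ∀ x : Fin N → ℝ, 1 ≤ ‖x‖ →
      |Q x| ≤ C * ‖x‖ ^ ((2 : ℝ) - N) ∧
      (∀ j : Fin N, |fderiv ℝ Q x (Pi.single j 1)| ≤ C * ‖x‖ ^ ((1 : ℝ) - N)) ∧
      (∀ j k : Fin N,
        |fderiv ℝ (fun y => fderiv ℝ Q y (Pi.single k 1)) x (Pi.single j 1)|
          ≤ C * ‖x‖ ^ (-(N : ℝ)))) :
    ∀ j : Fin N,
      (∫ x : Fin N → ℝ, (fderiv ℝ Q x (Pi.single j 1)) ^ 2)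
        = (1 / (N : ℝ)) * ∫ x : Fin N → ℝ, ∑ k : Fin N, (fderiv ℝ Q x (Pi.single k 1)) ^ 2 := by
  obtain ⟨n, rfl⟩ : ∃ n, N = n + 1 := ⟨N - 1, by omega⟩
  have hN3 : (3 : ℝ) ≤ ((n + 1 : ℕ) : ℝ) := by exact_mod_cast hN
  set r : ℝ := 4 / (((n + 1 : ℕ) : ℝ) - 2) with hrdef
  have hr : 0 < r := by
    rw [hrdef]
    have : (0:ℝ) < ((n + 1 : ℕ) : ℝ) - 2 := by linarith
    positivity
  -- differentiability facts
  have hQd : Differentiable ℝ Q := hQ.differentiable (by norm_num)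
  have hA : ∀ x, HasFDerivAt Q (fderiv ℝ Q x) x := fun x => (hQd x).hasFDerivAt
  have hQ1 : ContDiff ℝ 1 (fderiv ℝ Q) := hQ.fderiv_right (by norm_num)
  have hucd : ∀ i : Fin (n + 1), ContDiff ℝ 1 (fun y => fderiv ℝ Q y (Pi.single i 1)) :=
    fun i => hQ1.clm_apply contDiff_const
  have hu : ∀ (i : Fin (n + 1)) (x), HasFDerivAt (fun y => fderiv ℝ Q y (Pi.single i 1))
      (fderiv ℝ (fun y => fderiv ℝ Q y (Pi.single i 1)) x) x :=
    fun i x => (((hucd i).differentiable (by norm_num)) x).hasFDerivAt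
  have hflip : ∀ (x) (i : Fin (n + 1)), fderiv ℝ (fun y => fderiv ℝ Q y (Pi.single i 1)) x
      = (fderiv ℝ (fderiv ℝ Q) x).flip (Pi.single i 1) := by
    intro x i
    have h := fderiv_clm_apply (hQ1.differentiable (by norm_num) x)
      (differentiableAt_const (Pi.single i 1 : Fin (n+1) → ℝ))
    simpa using h
  have hsym : ∀ (x) (i k : Fin (n + 1)),
      fderiv ℝ (fun y => fderiv ℝ Q y (Pi.single i 1)) x (Pi.single k 1)
      = fderiv ℝ (fun y => fderiv ℝ Q y (Pi.single k 1)) x (Pi.single i 1) := by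
    intro x i k
    rw [hflip x i, hflip x k, ContinuousLinearMap.flip_apply, ContinuousLinearMap.flip_apply]
    exact (hQ.contDiffAt (x := x)).isSymmSndFDerivAt (by simp) _ _
  -- integrability facts
  have hIj : ∀ k : Fin (n + 1),
      Integrable (fun x : Fin (n + 1) → ℝ => (fderiv ℝ Q x (Pi.single k 1)) ^ 2) := by
    intro k
    refine hgrad.mono' (((hucd k).continuous.pow 2).aestronglyMeasurable) ?_
    refine Filter.Eventually.of_forall fun x => ?_
    rw [Real.norm_eq_abs, abs_of_nonneg (sq_nonneg _)]
    exact Finset.single_le_sum (f := fun i => (fderiv ℝ Q x (Pi.single i 1)) ^ 2)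
      (fun i _ => sq_nonneg _) (Finset.mem_univ k)
  obtain ⟨C₀, hC₀⟩ := hdecay
  set C : ℝ := max C₀ 1 with hCdef
  have hC1 : (1:ℝ) ≤ C := le_max_right _ _
  have hd1 : ∀ z : Fin (n + 1) → ℝ, 1 ≤ ‖z‖ →
      |Q z| ≤ C * ‖z‖ ^ ((2 : ℝ) - (n + 1 : ℕ)) := fun z hz =>
    ((hC₀ z hz).1).trans
      (mul_le_mul_of_nonneg_right (le_max_left _ _) (Real.rpow_nonneg (norm_nonneg z) _))
  have hd2 : ∀ z : Fin (n + 1) → ℝ, 1 ≤ ‖z‖ → ∀ i : Fin (n + 1),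
      |fderiv ℝ Q z (Pi.single i 1)| ≤ C * ‖z‖ ^ ((1 : ℝ) - (n + 1 : ℕ)) := fun z hz i =>
    ((hC₀ z hz).2.1 i).trans
      (mul_le_mul_of_nonneg_right (le_max_left _ _) (Real.rpow_nonneg (norm_nonneg z) _))
  have hIF : Integrable (fun x : Fin (n + 1) → ℝ => |Q x| ^ (r + 2) / (r + 2)) :=
    poho_F_integrable hN hrdef Q hQ.continuous C hC1 hd1
  -- the key Pohozaev-type identity, for every direction j
  have hkey : ∀ j : Fin (n + 1),
      (∫ x : Fin (n + 1) → ℝ, (fderiv ℝ Q x (Pi.single j 1)) ^ 2)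
        + (∫ x : Fin (n + 1) → ℝ, |Q x| ^ (r + 2) / (r + 2))
      = (∫ x : Fin (n + 1) → ℝ, ∑ k, (fderiv ℝ Q x (Pi.single k 1)) ^ 2) / 2 := by
    intro j
    have hg_int : Integrable (fun x : Fin (n + 1) → ℝ =>
        (fderiv ℝ Q x (Pi.single j 1)) ^ 2 + |Q x| ^ (r + 2) / (r + 2)
          - (∑ k, (fderiv ℝ Q x (Pi.single k 1)) ^ 2) / 2) :=
      ((hIj j).add hIF).sub (hgrad.div_const 2)
    have hWex := fun (i : Fin (n + 1)) (x : Fin (n + 1) → ℝ) =>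
      poho_calc hr Q (fun x => fderiv ℝ Q x)
        (fun i x => fderiv ℝ (fun y => fderiv ℝ Q y (Pi.single i 1)) x) hA hu j i x
    have hdivg : ∀ x : Fin (n + 1) → ℝ, (∑ i, (hWex i x).choose (Pi.single i 1)) =
        (fderiv ℝ Q x (Pi.single j 1)) ^ 2 + |Q x| ^ (r + 2) / (r + 2)
          - (∑ k, (fderiv ℝ Q x (Pi.single k 1)) ^ 2) / 2 := by
      intro x
      rw [Finset.sum_congr rfl fun i _ => (hWex i x).choose_spec.2]
      exact poho_sum_eval Q _ _ hsym heq j x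
    set KN : ℝ := ((n + 1 : ℕ) : ℝ) *
      (((((n + 1 : ℕ) : ℝ) * C ^ 2 + C ^ (r + 2)) * 2) * (2 ^ n * 2)) with hKNdef
    have hbox : ∀ R : ℝ, 1 ≤ R →
        |∫ x in Set.Icc (fun _ : Fin (n + 1) => -R) (fun _ : Fin (n + 1) => R),
            ((fderiv ℝ Q x (Pi.single j 1)) ^ 2 + |Q x| ^ (r + 2) / (r + 2)
              - (∑ k, (fderiv ℝ Q x (Pi.single k 1)) ^ 2) / 2)|
          ≤ KN * R ^ (1 - (n : ℝ)) := by
      intro R hR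
      have hRpos : (0:ℝ) < R := by linarith
      have hle : (fun _ : Fin (n + 1) => -R) ≤ (fun _ : Fin (n + 1) => R) := fun i => by
        dsimp; linarith
      have hfun : (fun x : Fin (n + 1) → ℝ => ∑ i, (hWex i x).choose (Pi.single i 1))
          = fun x : Fin (n + 1) → ℝ =>
            (fderiv ℝ Q x (Pi.single j 1)) ^ 2 + |Q x| ^ (r + 2) / (r + 2)
              - (∑ k, (fderiv ℝ Q x (Pi.single k 1)) ^ 2) / 2 := funext hdivg
      have hdt := integral_divergence_of_hasFDerivAt_off_countable'
        (a := fun _ : Fin (n + 1) => -R) (b := fun _ : Fin (n + 1) => R) hle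
        (fun i y => y j * fderiv ℝ Q y (Pi.single j 1) * fderiv ℝ Q y (Pi.single i 1)
          - (if i = j then y j * ((∑ k, (fderiv ℝ Q y (Pi.single k 1)) ^ 2) / 2
              - |Q y| ^ (r + 2) / (r + 2)) else 0))
        (fun i x => (hWex i x).choose) ∅ Set.countable_empty
        (fun i => Continuous.continuousOn (continuous_iff_continuousAt.2
          fun x => ((hWex i x).choose_spec.1.differentiableAt.continuousAt)))
        (fun x _ i => (hWex i x).choose_spec.1)
        (by rw [show (fun x : Fin (n + 1) → ℝ => ∑ i, (hWex i x).choose (Pi.single i 1)) = _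
              from hfun]
            exact hg_int.integrableOn)
      rw [show (fun x : Fin (n + 1) → ℝ => ∑ i, (hWex i x).choose (Pi.single i 1)) = _
        from hfun] at hdt
      rw [hdt]
      have hconv : R ^ (3 - 2 * (((n + 1 : ℕ)) : ℝ)) * (2 * R) ^ n
          = 2 ^ n * R ^ (1 - (n : ℝ)) := by
        have h0 : R ^ (3 - 2 * (((n + 1 : ℕ)) : ℝ)) * R ^ ((n : ℕ) : ℝ) = R ^ (1 - (n : ℝ)) := by
          rw [← Real.rpow_add hRpos]
          congr 1
          push_cast; ring
        rw [mul_pow, ← Real.rpow_natCast R n,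
          show R ^ (3 - 2 * (((n + 1 : ℕ)) : ℝ)) * (2 ^ n * R ^ ((n : ℕ) : ℝ))
            = (R ^ (3 - 2 * (((n + 1 : ℕ)) : ℝ)) * R ^ ((n : ℕ) : ℝ)) * 2 ^ n from by ring, h0]
        ring
      have hface : ∀ (i : Fin (n + 1)) (c : ℝ), |c| = R →
          |∫ y in Set.Icc ((fun _ : Fin (n + 1) => -R) ∘ i.succAbove)
              ((fun _ : Fin (n + 1) => R) ∘ i.succAbove),
            ((i.insertNth c y : Fin (n + 1) → ℝ) j
                * fderiv ℝ Q (i.insertNth c y : Fin (n + 1) → ℝ) (Pi.single j 1)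
                * fderiv ℝ Q (i.insertNth c y : Fin (n + 1) → ℝ) (Pi.single i 1)
              - (if i = j then (i.insertNth c y : Fin (n + 1) → ℝ) j
                  * ((∑ k, (fderiv ℝ Q (i.insertNth c y : Fin (n + 1) → ℝ) (Pi.single k 1)) ^ 2) / 2
                    - |Q (i.insertNth c y : Fin (n + 1) → ℝ)| ^ (r + 2) / (r + 2)) else 0))|
            ≤ ((((n + 1 : ℕ) : ℝ) * C ^ 2 + C ^ (r + 2)) * 2)
                * (2 ^ n * R ^ (1 - (n : ℝ))) := by
        intro i c hc
        have hvol : (volume (Set.Icc ((fun _ : Fin (n + 1) => -R) ∘ i.succAbove)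
            ((fun _ : Fin (n + 1) => R) ∘ i.succAbove))).toReal = (2 * R) ^ n := by
          rw [Real.volume_Icc_pi_toReal (fun k => by dsimp [Function.comp]; linarith)]
          simp only [Function.comp_apply, sub_neg_eq_add]
          rw [Finset.prod_const, Finset.card_univ, Fintype.card_fin]
          ring_nf
        rw [← Real.norm_eq_abs]
        refine (norm_setIntegral_le_of_norm_le_const
          (C := ((((n + 1 : ℕ) : ℝ) * C ^ 2 + C ^ (r + 2)) * 2)
            * R ^ (3 - 2 * (((n + 1 : ℕ)) : ℝ)))
          (isCompact_Icc.measure_lt_top) ?_).trans ?_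
        · intro y _
          have hz : R ≤ ‖(i.insertNth c y : Fin (n + 1) → ℝ)‖ := by
            have h1 := norm_le_pi_norm (i.insertNth c y : Fin (n + 1) → ℝ) i
            rw [Fin.insertNth_apply_same] at h1
            rw [← hc]
            simpa using h1
          have hvb := poho_V_bound hN hrdef Q (fun x => fderiv ℝ Q x) C hC1 hd1 hd2
            j i R hR (i.insertNth c y : Fin (n + 1) → ℝ) hz
          rw [Real.norm_eq_abs]
          exact hvb
        · rw [measureReal_def, hvol]
          exact le_of_eq (by rw [mul_assoc, hconv])
      refine (Finset.abs_sum_le_sum_abs _ _).trans ?_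
      refine (Finset.sum_le_sum (fun i (_ : i ∈ Finset.univ) =>
        (abs_sub _ _).trans (add_le_add (hface i R (abs_of_pos hRpos))
          (hface i (-R) (by rw [abs_neg]; exact abs_of_pos hRpos))))).trans ?_
      rw [Finset.sum_const, Finset.card_univ, Fintype.card_fin, nsmul_eq_mul, hKNdef]
      exact le_of_eq (by ring)
    have hmono : Monotone (fun m : ℕ => Set.Icc (fun _ : Fin (n + 1) => -((m:ℝ) + 1))
        (fun _ : Fin (n + 1) => ((m:ℝ) + 1))) := by
      intro p q hpq
      have hpq' : (p:ℝ) ≤ q := Nat.cast_le.2 hpq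
      exact Set.Icc_subset_Icc (fun i => by dsimp; linarith) (fun i => by dsimp; linarith)
    have hun : (⋃ m : ℕ, Set.Icc (fun _ : Fin (n + 1) => -((m:ℝ) + 1))
        (fun _ : Fin (n + 1) => ((m:ℝ) + 1))) = Set.univ := by
      rw [Set.eq_univ_iff_forall]
      intro x
      refine Set.mem_iUnion.2 ⟨⌈‖x‖⌉₊, ?_⟩
      rw [Set.mem_Icc]
      have hc : ‖x‖ ≤ (⌈‖x‖⌉₊ : ℝ) := Nat.le_ceil _
      constructor
      · intro i
        have h1 : |x i| ≤ ‖x‖ := by simpa using norm_le_pi_norm x i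
        have h2 := (abs_le.1 h1).1
        dsimp; linarith
      · intro i
        have h1 : |x i| ≤ ‖x‖ := by simpa using norm_le_pi_norm x i
        have h2 := (abs_le.1 h1).2
        dsimp; linarith
    have hseq := tendsto_setIntegral_of_monotone
      (f := fun x : Fin (n + 1) → ℝ =>
        (fderiv ℝ Q x (Pi.single j 1)) ^ 2 + |Q x| ^ (r + 2) / (r + 2)
          - (∑ k, (fderiv ℝ Q x (Pi.single k 1)) ^ 2) / 2)
      (fun m : ℕ => measurableSet_Icc) hmono
      (by rw [hun]; exact hg_int.integrableOn)
    rw [hun, setIntegral_univ] at hseq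
    have hsq : Filter.Tendsto (fun m : ℕ =>
        ∫ x in Set.Icc (fun _ : Fin (n + 1) => -((m:ℝ) + 1))
          (fun _ : Fin (n + 1) => ((m:ℝ) + 1)),
          ((fderiv ℝ Q x (Pi.single j 1)) ^ 2 + |Q x| ^ (r + 2) / (r + 2)
            - (∑ k, (fderiv ℝ Q x (Pi.single k 1)) ^ 2) / 2)) atTop (𝓝 0) := by
      have hb : ∀ m : ℕ, ‖∫ x in Set.Icc (fun _ : Fin (n + 1) => -((m:ℝ) + 1))
          (fun _ : Fin (n + 1) => ((m:ℝ) + 1)),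
          ((fderiv ℝ Q x (Pi.single j 1)) ^ 2 + |Q x| ^ (r + 2) / (r + 2)
            - (∑ k, (fderiv ℝ Q x (Pi.single k 1)) ^ 2) / 2)‖
          ≤ KN * ((m:ℝ) + 1) ^ (1 - (n : ℝ)) := fun m => by
        rw [Real.norm_eq_abs]
        exact hbox ((m:ℝ) + 1) (by have : (0:ℝ) ≤ (m:ℝ) := Nat.cast_nonneg m; linarith)
      refine squeeze_zero_norm hb ?_
      have h1 : Filter.Tendsto (fun m : ℕ => ((m:ℝ) + 1)) atTop atTop :=
        tendsto_atTop_add_const_right _ 1 tendsto_natCast_atTop_atTop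
      have h3 : Filter.Tendsto (fun t : ℝ => t ^ (-((n:ℝ) - 1))) atTop (𝓝 0) :=
        tendsto_rpow_neg_atTop (by
          have h4 : (2:ℝ) ≤ (n:ℝ) := by exact_mod_cast (by omega : 2 ≤ n)
          linarith)
      have h5 := (h3.comp h1).const_mul KN
      simpa [Function.comp, show -((n:ℝ) - 1) = 1 - (n:ℝ) by ring] using h5
    have hzero := tendsto_nhds_unique hseq hsq
    have hsplit := integral_sub (μ := volume) ((hIj j).add hIF) (hgrad.div_const 2)
    simp only [Pi.add_apply] at hsplit
    have hadd := integral_add (μ := volume) (hIj j) hIF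
    have hdiv2 : (∫ x : Fin (n + 1) → ℝ,
        (∑ k : Fin (n + 1), (fderiv ℝ Q x (Pi.single k 1)) ^ 2) / 2)
        = (∫ x : Fin (n + 1) → ℝ, ∑ k : Fin (n + 1), (fderiv ℝ Q x (Pi.single k 1)) ^ 2) / 2 :=
      integral_div 2 _
    linarith [hzero, hsplit, hadd, hdiv2]
  -- conclude by summation over j
  intro j
  have hT : ∫ x : Fin (n + 1) → ℝ, ∑ k, (fderiv ℝ Q x (Pi.single k 1)) ^ 2
      = ∑ k : Fin (n + 1), ∫ x : Fin (n + 1) → ℝ, (fderiv ℝ Q x (Pi.single k 1)) ^ 2 :=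
    integral_finset_sum _ fun k _ => hIj k
  set T : ℝ := ∫ x : Fin (n + 1) → ℝ, ∑ k, (fderiv ℝ Q x (Pi.single k 1)) ^ 2 with hTdef
  set Φ : ℝ := ∫ x : Fin (n + 1) → ℝ, |Q x| ^ (r + 2) / (r + 2) with hPdef
  have hsum : ((n + 1 : ℕ) : ℝ) * (T / 2 - Φ) = T := by
    calc ((n + 1 : ℕ) : ℝ) * (T / 2 - Φ) = ∑ _k : Fin (n + 1), (T / 2 - Φ) := by
          rw [Finset.sum_const, Finset.card_univ, Fintype.card_fin, nsmul_eq_mul]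
      _ = ∑ k : Fin (n + 1), ∫ x : Fin (n + 1) → ℝ, (fderiv ℝ Q x (Pi.single k 1)) ^ 2 :=
          Finset.sum_congr rfl fun k _ => by linarith [hkey k]
      _ = T := hT.symm
  have hNpos : (0:ℝ) < ((n + 1 : ℕ) : ℝ) := by positivity
  have hEj : (∫ x : Fin (n + 1) → ℝ, (fderiv ℝ Q x (Pi.single j 1)) ^ 2) = T / 2 - Φ := by
    linarith [hkey j]
  rw [hEj]
  rw [div_mul_eq_mul_div, one_mul, eq_div_iff (by linarith : ((n + 1 : ℕ) : ℝ) ≠ 0)]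
  linarith [hsum]
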